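/- If X_λ is a Poisson random variable with parameter λ > 0 and x ≥ 2λ, then P(X_λ ≥ x) ≤ exp(-δ₀ x) where δ₀ = log 2 - 1/2. -/

import Mathlib

open MeasureTheory ProbabilityTheory

lemma poisson_tail_aux (r : NNReal) (x : ℝ) (hx : 2 * r ≤ x) :
    ∑' n : ℕ, Set.indicator {n : ℕ | x ≤ (n : ℝ)} (poissonPMFReal r) n ≤
      Real.exp (-(Real.log 2 - 1 / 2) * x) := by
  have h2 : HasSum (fun n : ℕ ↦ poissonPMFReal (2 * r) n) 1 := poissonPMFRealSum (2 * r)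
  have hg : HasSum (fun n : ℕ ↦ (2 : ℝ) ^ (-x) * Real.exp r * poissonPMFReal (2 * r) n)
      ((2 : ℝ) ^ (-x) * Real.exp r) := by
    simpa using h2.mul_left ((2 : ℝ) ^ (-x) * Real.exp r)
  have hle : ∀ n : ℕ, Set.indicator {n : ℕ | x ≤ (n : ℝ)} (poissonPMFReal r) n ≤
      (2 : ℝ) ^ (-x) * Real.exp r * poissonPMFReal (2 * r) n := by
    intro n
    have hpos : (0 : ℝ) ≤ (2 : ℝ) ^ (-x) * Real.exp r * poissonPMFReal (2 * r) n :=
      mul_nonneg (mul_nonneg (Real.rpow_nonneg (by norm_num) _) (Real.exp_nonneg _))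
        poissonPMFReal_nonneg
    by_cases hn : x ≤ (n : ℝ)
    · have hmem : n ∈ {n : ℕ | x ≤ (n : ℝ)} := hn
      rw [Set.indicator_of_mem hmem]
      have key : (2 : ℝ) ^ (-x) * Real.exp r * poissonPMFReal (2 * r) n =
          ((2 : ℝ) ^ (-x) * 2 ^ n) * poissonPMFReal r n := by
        unfold poissonPMFReal
        push_cast
        rw [mul_pow]
        rw [show Real.exp (-(2 * (r : ℝ))) = Real.exp (-(r:ℝ)) * Real.exp (-(r:ℝ)) by
          rw [← Real.exp_add]; ring_nf]
        field_simp [Real.exp_neg]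
        ring_nf
        rw [Real.exp_neg]
        field_simp
      rw [key]
      have h1 : (1 : ℝ) ≤ (2 : ℝ) ^ (-x) * 2 ^ n := by
        rw [← Real.rpow_natCast 2 n, ← Real.rpow_add (by norm_num)]
        exact Real.one_le_rpow one_le_two (by linarith)
      exact le_mul_of_one_le_left poissonPMFReal_nonneg h1
    · have hmem : n ∉ {n : ℕ | x ≤ (n : ℝ)} := hn
      rw [Set.indicator_of_notMem hmem]; exact hpos
  calc ∑' n : ℕ, Set.indicator {n : ℕ | x ≤ (n : ℝ)} (poissonPMFReal r) n
      ≤ ∑' n : ℕ, (2 : ℝ) ^ (-x) * Real.exp r * poissonPMFReal (2 * r) n := by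
        refine Summable.tsum_le_tsum hle ?_ hg.summable
        exact (Summable.indicator (poissonPMFRealSum r).summable _)
    _ = (2 : ℝ) ^ (-x) * Real.exp r := hg.tsum_eq
    _ ≤ Real.exp (-(Real.log 2 - 1 / 2) * x) := by
        rw [Real.rpow_def_of_pos (by norm_num), ← Real.exp_add]
        apply Real.exp_le_exp.mpr
        nlinarith [Real.log_pos (by norm_num : (1:ℝ) < 2)]

theorem poisson_chernoff_bound_two {Ω : Type*} [MeasurableSpace Ω]
    (P : Measure Ω) [IsProbabilityMeasure P] (r : NNReal) (hr : 0 < r)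
    (X : Ω → ℕ) (hX : Measure.map X P = poissonMeasure r)
    (x : ℝ) (hx : 2 * r ≤ x) :
    P {ω | x ≤ (X ω : ℝ)} ≤ ENNReal.ofReal (Real.exp (-(Real.log 2 - 1 / 2) * x)) := by
  have hae : AEMeasurable X P := by
    by_contra h
    rw [Measure.map_of_not_aemeasurable h] at hX
    have h1 : (poissonMeasure r) Set.univ = 1 := measure_univ
    rw [← hX] at h1
    simp at h1
  have hset : MeasurableSet {n : ℕ | x ≤ (n : ℝ)} := by trivial
  have hmap : P {ω | x ≤ (X ω : ℝ)} = poissonMeasure r {n : ℕ | x ≤ (n : ℝ)} := by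
    rw [← hX, Measure.map_apply_of_aemeasurable hae hset]
    rfl
  have hpm : poissonMeasure r {n : ℕ | x ≤ (n : ℝ)} =
      ∑' n : ℕ, Set.indicator {n : ℕ | x ≤ (n : ℝ)} (poissonPMF r) n := by
    rw [poissonMeasure, Measure.sum_apply _ hset]
    refine tsum_congr (fun n => ?_)
    rw [Measure.smul_apply, Measure.dirac_apply' _ hset]
    by_cases hn : x ≤ (n : ℝ)
    · have hm : n ∈ {n : ℕ | x ≤ (n : ℝ)} := hn
      rw [Set.indicator_of_mem hm, Set.indicator_of_mem hm, ← poissonPMFReal_ofReal_eq_poissonPMF]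
      simp [poissonPMFReal]
    · simp [Set.indicator_of_notMem (show n ∉ {n : ℕ | x ≤ (n : ℝ)} from hn)]
  rw [hmap, hpm]
  have heq : ∀ n : ℕ, Set.indicator {n : ℕ | x ≤ (n : ℝ)} (poissonPMF r) n =
      ENNReal.ofReal (Set.indicator {n : ℕ | x ≤ (n : ℝ)} (poissonPMFReal r) n) := by
    intro n
    by_cases hn : x ≤ (n : ℝ)
    · have hmem : n ∈ {n : ℕ | x ≤ (n : ℝ)} := hn
      rw [Set.indicator_of_mem hmem, Set.indicator_of_mem hmem]; rfl
    · have hmem : n ∉ {n : ℕ | x ≤ (n : ℝ)} := hn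
      rw [Set.indicator_of_notMem hmem, Set.indicator_of_notMem hmem, ENNReal.ofReal_zero]
  calc ∑' n : ℕ, Set.indicator {n : ℕ | x ≤ (n : ℝ)} (poissonPMF r) n
      = ∑' n : ℕ, ENNReal.ofReal (Set.indicator {n : ℕ | x ≤ (n : ℝ)} (poissonPMFReal r) n) := by
        exact tsum_congr heq
    _ = ENNReal.ofReal (∑' n : ℕ, Set.indicator {n : ℕ | x ≤ (n : ℝ)} (poissonPMFReal r) n) := by
        rw [ENNReal.ofReal_tsum_of_nonneg]
        · intro n; exact Set.indicator_nonneg (fun _ _ ↦ poissonPMFReal_nonneg) n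
        · exact (Summable.indicator (poissonPMFRealSum r).summable _)
    _ ≤ ENNReal.ofReal (Real.exp (-(Real.log 2 - 1 / 2) * x)) :=
        ENNReal.ofReal_le_ofReal (poisson_tail_aux r x hx)
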